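/- Let m be a nonzero integer, c := (1 + √(1+m²))/(2m), θ := c·[[0,1],[−1,0]] and 𝒜 := 4π·[[0,1],[1,0]] (2×2 real matrices). Then det(I₂ + (1/(2π))θ𝒜) = (−2 − 2√(1+m²))/m² ≠ 0, and with 𝒜^θ := 𝒜(I₂ + (1/(2π))θ𝒜)⁻¹ one has (1/(2π))²·𝒜^θ θ (𝒜^θ)ᵗ = [[0,m],[−m,0]]. -/

import Mathlib

open Matrix Real

noncomputable def thetaEx (m : ℤ) : Matrix (Fin 2) (Fin 2) ℝ :=
  ((1 + Real.sqrt (1 + (m : ℝ) ^ 2)) / (2 * (m : ℝ))) • !![0, 1; -1, 0]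

noncomputable def calAEx : Matrix (Fin 2) (Fin 2) ℝ :=
  (4 * Real.pi) • !![0, 1; 1, 0]

theorem example_nontrivial_pair (m : ℤ) (hm : m ≠ 0) :
    ((1 : Matrix (Fin 2) (Fin 2) ℝ) + (1 / (2 * π)) • (thetaEx m * calAEx)).det =
      (-2 - 2 * Real.sqrt (1 + (m : ℝ) ^ 2)) / (m : ℝ) ^ 2 ∧
    ((1 : Matrix (Fin 2) (Fin 2) ℝ) + (1 / (2 * π)) • (thetaEx m * calAEx)).det ≠ 0 ∧
    ((1 / (2 * π)) ^ 2) •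
        ((calAEx * ((1 : Matrix (Fin 2) (Fin 2) ℝ) + (1 / (2 * π)) • (thetaEx m * calAEx))⁻¹) *
          thetaEx m *
          (calAEx * ((1 : Matrix (Fin 2) (Fin 2) ℝ) + (1 / (2 * π)) • (thetaEx m * calAEx))⁻¹)ᵀ) =
      !![0, (m : ℝ); -(m : ℝ), 0] := by
  have hm' : (m : ℝ) ≠ 0 := Int.cast_ne_zero.mpr hm
  have hm1 : 1 ≤ |(m : ℝ)| := by
    rw [← Int.cast_abs]
    exact_mod_cast Int.one_le_abs hm
  set s := Real.sqrt (1 + (m : ℝ) ^ 2) with hsdef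
  have hs2 : s ^ 2 = 1 + (m : ℝ) ^ 2 := Real.sq_sqrt (by positivity)
  have hs0 : 0 ≤ s := Real.sqrt_nonneg _
  have hs1 : 1 ≤ s := by nlinarith
  have habs : |(m : ℝ)| < s := by nlinarith [sq_abs (m : ℝ), abs_nonneg (m : ℝ)]
  have hp : (0 : ℝ) < (m : ℝ) + 1 + s := by
    have := neg_abs_le (m : ℝ); linarith
  have hq : (m : ℝ) - 1 - s < 0 := by
    have := le_abs_self (m : ℝ); linarith
  have hπ : (π : ℝ) ≠ 0 := Real.pi_ne_zero
  have hM : (1 : Matrix (Fin 2) (Fin 2) ℝ) + (1 / (2 * π)) • (thetaEx m * calAEx) =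
      !![((m : ℝ) + 1 + s) / m, 0; 0, ((m : ℝ) - 1 - s) / m] := by
    unfold thetaEx calAEx
    ext i j
    fin_cases i <;> fin_cases j <;>
      simp [Matrix.mul_apply, Fin.sum_univ_two, Matrix.one_apply] <;>
      field_simp <;> ring
  have hinv : ((1 : Matrix (Fin 2) (Fin 2) ℝ) + (1 / (2 * π)) • (thetaEx m * calAEx))⁻¹ =
      !![(m : ℝ) / ((m : ℝ) + 1 + s), 0; 0, (m : ℝ) / ((m : ℝ) - 1 - s)] := by
    rw [hM]
    apply Matrix.inv_eq_left_inv
    ext i j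
    fin_cases i <;> fin_cases j <;>
      simp [Matrix.mul_apply, Fin.sum_univ_two, Matrix.one_apply] <;>
      field_simp [ne_of_gt hp, ne_of_lt hq]
  refine ⟨?_, ?_, ?_⟩
  · rw [hM, Matrix.det_fin_two_of]
    field_simp
    ring_nf
    nlinarith [hs2]
  · rw [hM, Matrix.det_fin_two_of]
    simp only [mul_zero, sub_zero]
    rw [div_mul_div_comm]
    apply div_ne_zero
    · nlinarith
    · positivity
  · rw [hinv]
    unfold thetaEx calAEx
    have hp' : ((m:ℝ) + 1 + s) ≠ 0 := ne_of_gt hp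
    have hq' : ((m:ℝ) - 1 - s) ≠ 0 := ne_of_lt hq
    ext i j
    fin_cases i <;> fin_cases j <;>
      simp [Matrix.mul_apply, Fin.sum_univ_two, Matrix.transpose_apply, Matrix.vecHead,
        Matrix.vecTail, Matrix.vecMul, dotProduct, ← hsdef] <;>
      field_simp <;>
      first
        | linear_combination (8 * π ^ 2 * (m:ℝ) ^ 2) * hs2
        | linear_combination (-8 * π ^ 2 * (m:ℝ) ^ 2) * hs2
        | linear_combination 8 * hs2
        | linear_combination (-8) * hs2
        | ring
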